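/- Let X be a Banach space, φ : X → ℝ∪{+∞} a proper lower semicontinuous function, S_φ := {x ∈ X : φ(x) ≤ 0}, τ > 0, and x ∈ S_φ. Then e({h ∈ X : φ'_H(x; h) ≤ 1}, T^B(S_φ, x)) ≤ τ if and only if d(h, T^B(S_φ, x)) ≤ τ·max{φ'_H(x; h), 0} for all h ∈ X. -/

import Mathlib

open Filter Metric Set Pointwise Topology
open scoped ENNReal

noncomputable section

/-- The Bouligand (contingent) tangent cone of `A` at `u`. -/
def bouligand {X : Type*} [NormedAddCommGroup X] [NormedSpace ℝ X] (A : Set X) (u : X) :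
    Set X :=
  {v | ∃ (vs : ℕ → X) (ts : ℕ → ℝ),
    Tendsto vs atTop (𝓝 v) ∧ Tendsto ts atTop (𝓝 0) ∧ (∀ n, 0 < ts n) ∧
    ∀ n, u + ts n • vs n ∈ A}

/-- The Shapiro first order contact property of `A` at `a`. -/
def shapiro {X : Type*} [NormedAddCommGroup X] [NormedSpace ℝ X] (A : Set X) (a : X) : Prop :=
  ∀ ε > 0, ∃ δ > 0, ∀ x ∈ A ∩ ball a δ, ∀ u ∈ A ∩ ball a δ,
    infDist (x - u) (bouligand A u) ≤ ε * ‖x - u‖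

/-- The lower Hadamard directional derivative of `φ` at `x` in direction `h`. -/
def hadamardDeriv {X : Type*} [NormedAddCommGroup X] [NormedSpace ℝ X]
    (φ : X → EReal) (x h : X) : EReal :=
  liminf (fun p : ℝ × X => (((1 : ℝ) / p.1 : ℝ) : EReal) * (φ (x + p.1 • p.2) - φ x))
    ((𝓝[>] (0 : ℝ)) ×ˢ 𝓝 h)

/-- The epigraph of an `EReal`-valued function, as a subset of `X × ℝ`. -/
def epigraph {X : Type*} (φ : X → EReal) : Set (X × ℝ) := {p | φ p.1 ≤ (p.2 : EReal)}

/-- The Hausdorff-Pompeiu excess of `C` beyond `D`. -/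
def excess {X : Type*} [PseudoEMetricSpace X] (C D : Set X) : ℝ≥0∞ :=
  ⨆ c ∈ C, EMetric.infEdist c D

/-- Metric regularity of `φ` around `xbar` (for `φ xbar`). -/
def metReg {X Y : Type*} [NormedAddCommGroup X] [NormedAddCommGroup Y]
    (φ : X → Y) (xbar : X) : Prop :=
  ∃ κ > (0 : ℝ), ∃ U ∈ 𝓝 xbar, ∃ V ∈ 𝓝 (φ xbar), ∀ x ∈ U, ∀ y ∈ V,
    EMetric.infEdist x (φ ⁻¹' {y}) ≤ ENNReal.ofReal (κ * ‖φ x - y‖)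
section AuxLemmas
variable {X : Type*} [NormedAddCommGroup X] [NormedSpace ℝ X]

lemma zero_mem_bouligand {A : Set X} {u : X} (hu : u ∈ A) : 0 ∈ bouligand A u :=
  ⟨fun _ => 0, fun n => 1 / (n + 1), tendsto_const_nhds,
    tendsto_one_div_add_atTop_nhds_zero_nat, fun n => by positivity, fun n => by simpa using hu⟩

lemma smul_mem_bouligand {A : Set X} {u : X} {c : ℝ} (hc : 0 < c) {v : X}
    (hv : v ∈ bouligand A u) : c • v ∈ bouligand A u := by
  obtain ⟨vs, ts, hvs, hts, htp, hmem⟩ := hv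
  refine ⟨fun n => c • vs n, fun n => ts n / c, hvs.const_smul c, by simpa using hts.div_const c,
    fun n => div_pos (htp n) hc, fun n => ?_⟩
  rw [smul_smul, div_mul_cancel₀ _ hc.ne']
  exact hmem n

lemma infDist_smul_bouligand_le {A : Set X} {u : X} (hne : (bouligand A u).Nonempty)
    {c : ℝ} (hc : 0 < c) (h : X) :
    infDist (c • h) (bouligand A u) ≤ c * infDist h (bouligand A u) := by
  have hsub : c • bouligand A u ⊆ bouligand A u := by
    rintro _ ⟨v, hv, rfl⟩
    exact smul_mem_bouligand hc hv
  calc infDist (c • h) (bouligand A u) ≤ infDist (c • h) (c • bouligand A u) :=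
        infDist_le_infDist_of_subset hsub hne.smul_set
    _ = ‖c‖ * infDist h (bouligand A u) := infDist_smul₀ hc.ne' _ _
    _ = c * infDist h (bouligand A u) := by rw [Real.norm_of_nonneg hc.le]

lemma hadamardDeriv_smul (φ : X → EReal) (x : X) {c : ℝ} (hc : 0 < c) (h : X) :
    hadamardDeriv φ x (c • h) = (c : EReal) * hadamardDeriv φ x h := by
  set f : ℝ × X → EReal :=
    fun p => (((1 : ℝ) / p.1 : ℝ) : EReal) * (φ (x + p.1 • p.2) - φ x) with hf
  set m : ℝ × X → ℝ × X := fun p => (p.1 / c, c • p.2) with hm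
  have hmap : map m ((𝓝[>] (0:ℝ)) ×ˢ 𝓝 h) = (𝓝[>] (0:ℝ)) ×ˢ 𝓝 (c • h) := by
    have h1 : map (fun s : ℝ => s / c) (𝓝[>] (0:ℝ)) = 𝓝[>] (0:ℝ) := by
      have e : map (fun s : ℝ => c⁻¹ • s) (𝓝[Ioi (0:ℝ)] 0)
          = 𝓝[(c⁻¹ • ·) '' Ioi (0:ℝ)] (c⁻¹ • (0:ℝ)) :=
        (Homeomorph.smulOfNeZero (c⁻¹) (inv_ne_zero hc.ne')).isEmbedding.map_nhdsWithin_eq _ _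
      have himg : (c⁻¹ • ·) '' Ioi (0:ℝ) = Ioi (0:ℝ) := by
        rw [image_smul, LinearOrderedField.smul_Ioi (inv_pos.2 hc), mul_zero]
      rw [show (fun s : ℝ => s / c) = fun s : ℝ => c⁻¹ • s from funext fun s => by
        rw [smul_eq_mul, div_eq_inv_mul], e, himg, smul_zero]
    have h2 : map (fun k : X => c • k) (𝓝 h) = 𝓝 (c • h) :=
      (Homeomorph.smulOfNeZero c hc.ne').map_nhds_eq h
    have hp := prod_map_map_eq (m₁ := fun s : ℝ => s / c) (m₂ := fun k : X => c • k)
      (f₁ := 𝓝[>] (0:ℝ)) (f₂ := 𝓝 h)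
    rw [h1, h2] at hp
    exact hp.symm
  have hcomp : (f ∘ m) = fun p => f p * (c : EReal) := by
    funext p
    simp only [Function.comp, hf, hm]
    rw [smul_smul, div_mul_cancel₀ _ hc.ne', one_div_div,
      show (c / p.1 : ℝ) = (1 / p.1) * c by ring, EReal.coe_mul, mul_right_comm]
  have hmono : Monotone (fun y : EReal => y * (c : EReal)) := fun a b hab =>
    mul_le_mul_of_nonneg_right hab (by exact_mod_cast hc.le)
  have hcont : ContinuousAt (fun y : EReal => y * (c : EReal))
      (liminf f ((𝓝[>] (0:ℝ)) ×ˢ 𝓝 h)) := by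
    have hmul : ContinuousAt (fun q : EReal × EReal => q.1 * q.2)
        (liminf f ((𝓝[>] (0:ℝ)) ×ˢ 𝓝 h), (c : EReal)) :=
      EReal.continuousAt_mul (Or.inr (EReal.coe_ne_bot c)) (Or.inr (EReal.coe_ne_top c))
        (Or.inr (by simp [hc.ne'])) (Or.inr (by simp [hc.ne']))
    have hin : ContinuousAt (fun y : EReal => (y, (c : EReal)))
        (liminf f ((𝓝[>] (0:ℝ)) ×ˢ 𝓝 h)) := continuousAt_id.prodMk continuousAt_const
    have := ContinuousAt.comp (f := fun y : EReal => (y, (c : EReal))) hmul hin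
    exact this
  calc hadamardDeriv φ x (c • h) = liminf f ((𝓝[>] (0:ℝ)) ×ˢ 𝓝 (c • h)) := rfl
    _ = liminf f (map m ((𝓝[>] (0:ℝ)) ×ˢ 𝓝 h)) := by rw [hmap]
    _ = liminf (f ∘ m) ((𝓝[>] (0:ℝ)) ×ˢ 𝓝 h) := (liminf_comp f m _).symm
    _ = liminf (fun p => f p * (c : EReal)) ((𝓝[>] (0:ℝ)) ×ˢ 𝓝 h) := by rw [hcomp]
    _ = liminf f ((𝓝[>] (0:ℝ)) ×ˢ 𝓝 h) * (c : EReal) :=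
        (hmono.map_liminf_of_continuousAt f hcont).symm
    _ = (c : EReal) * hadamardDeriv φ x h := mul_comm _ _

end AuxLemmas

theorem excess_le_iff_dist_le {X : Type*} [NormedAddCommGroup X] [NormedSpace ℝ X]
    [CompleteSpace X]
    (φ : X → EReal) (hlsc : LowerSemicontinuous φ) (hbot : ∀ x, φ x ≠ ⊥)
    (hproper : ∃ x, φ x ≠ ⊤)
    (S : Set X) (hS : S = {x | φ x ≤ 0}) (τ : ℝ) (hτ : 0 < τ) (x : X) (hx : x ∈ S) :
    excess {h | hadamardDeriv φ x h ≤ 1} (bouligand S x) ≤ ENNReal.ofReal τ ↔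
      ∀ h : X, ((infDist h (bouligand S x) : ℝ) : EReal) ≤
        (τ : EReal) * max (hadamardDeriv φ x h) 0 := by
  have hne : (bouligand S x).Nonempty := ⟨0, zero_mem_bouligand hx⟩
  constructor
  · intro hex h
    have hex' : ∀ h' : X, hadamardDeriv φ x h' ≤ 1 → infDist h' (bouligand S x) ≤ τ := by
      intro h' hh'
      have h1 : EMetric.infEdist h' (bouligand S x) ≤ ENNReal.ofReal τ :=
        le_trans (le_iSup₂ (f := fun c (_ : c ∈ {h | hadamardDeriv φ x h ≤ 1}) =>
          EMetric.infEdist c (bouligand S x)) h' hh') hex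
      exact ENNReal.toReal_le_of_le_ofReal hτ.le h1
    rcases le_or_gt (hadamardDeriv φ x h) 0 with hD | hD
    · rw [max_eq_right hD, mul_zero]
      have key : ∀ n : ℕ, infDist h (bouligand S x) ≤ τ * (1 / ((n : ℝ) + 1)) := by
        intro n
        have hc : (0 : ℝ) < (n : ℝ) + 1 := by positivity
        have hD' : hadamardDeriv φ x (((n : ℝ) + 1) • h) ≤ 1 := by
          rw [hadamardDeriv_smul φ x hc]
          have h0 : (((n : ℝ) + 1 : ℝ) : EReal) * hadamardDeriv φ x h ≤ 0 := by
            rw [mul_comm]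
            calc hadamardDeriv φ x h * (((n : ℝ) + 1 : ℝ) : EReal)
                ≤ 0 * (((n : ℝ) + 1 : ℝ) : EReal) :=
                  mul_le_mul_of_nonneg_right hD (by exact_mod_cast hc.le)
              _ = 0 := zero_mul _
          exact h0.trans zero_le_one
        have h2 := hex' _ hD'
        have h3 : infDist h (bouligand S x)
            ≤ (1 / ((n : ℝ) + 1)) * infDist ((((n : ℝ) + 1)) • h) (bouligand S x) := by
          have := infDist_smul_bouligand_le hne
            (show (0 : ℝ) < 1 / ((n : ℝ) + 1) by positivity) ((((n : ℝ) + 1)) • h)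
          rw [smul_smul, one_div, inv_mul_cancel₀ hc.ne', one_smul] at this
          rwa [one_div]
        calc infDist h (bouligand S x)
            ≤ (1 / ((n : ℝ) + 1)) * infDist ((((n : ℝ) + 1)) • h) (bouligand S x) := h3
          _ ≤ (1 / ((n : ℝ) + 1)) * τ := by
              exact mul_le_mul_of_nonneg_left h2 (by positivity)
          _ = τ * (1 / ((n : ℝ) + 1)) := mul_comm _ _
      have hlim : Tendsto (fun n : ℕ => τ * (1 / ((n : ℝ) + 1))) atTop (𝓝 0) := by
        simpa using tendsto_one_div_add_atTop_nhds_zero_nat.const_mul τ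
      have hle : infDist h (bouligand S x) ≤ 0 :=
        ge_of_tendsto hlim (Eventually.of_forall key)
      exact_mod_cast hle
    · by_cases htop : hadamardDeriv φ x h = ⊤
      · rw [max_eq_left hD.le, htop, EReal.coe_mul_top_of_pos hτ]
        exact le_top
      · set r := (hadamardDeriv φ x h).toReal with hr
        have hcoer : ((r : ℝ) : EReal) = hadamardDeriv φ x h :=
          EReal.coe_toReal htop (ne_bot_of_gt hD)
        have hrpos : 0 < r := by
          rw [← hcoer] at hD
          exact_mod_cast hD
        have hD1 : hadamardDeriv φ x (r⁻¹ • h) ≤ 1 := by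
          rw [hadamardDeriv_smul φ x (inv_pos.2 hrpos), ← hcoer, ← EReal.coe_mul,
            inv_mul_cancel₀ hrpos.ne']
          exact le_of_eq EReal.coe_one
        have h2 := hex' _ hD1
        have h3 : infDist h (bouligand S x) ≤ r * infDist (r⁻¹ • h) (bouligand S x) := by
          have := infDist_smul_bouligand_le hne hrpos (r⁻¹ • h)
          rwa [smul_smul, mul_inv_cancel₀ hrpos.ne', one_smul] at this
        have h4 : infDist h (bouligand S x) ≤ τ * r := by
          nlinarith [mul_le_mul_of_nonneg_left h2 hrpos.le]
        rw [max_eq_left hD.le, ← hcoer, ← EReal.coe_mul]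
        exact_mod_cast h4
  · intro hall
    refine iSup₂_le fun h hh => ?_
    have hh' : hadamardDeriv φ x h ≤ 1 := hh
    have h1 : ((infDist h (bouligand S x) : ℝ) : EReal) ≤ (τ : EReal) := by
      refine (hall h).trans ?_
      calc (τ : EReal) * max (hadamardDeriv φ x h) 0 ≤ (τ : EReal) * 1 := by
            rw [mul_comm ((τ : ℝ) : EReal), mul_comm ((τ : ℝ) : EReal) 1]
            exact mul_le_mul_of_nonneg_right (max_le hh' zero_le_one)
              (by exact_mod_cast hτ.le)
        _ = (τ : EReal) := mul_one _
    have h2 : infDist h (bouligand S x) ≤ τ := EReal.coe_le_coe_iff.1 h1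
    calc EMetric.infEdist h (bouligand S x)
        = ENNReal.ofReal (infDist h (bouligand S x)) := by
          rw [Metric.infDist, ENNReal.ofReal_toReal (Metric.infEdist_ne_top hne)]
          rfl
      _ ≤ ENNReal.ofReal τ := ENNReal.ofReal_le_ofReal h2
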